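/- Let A and B be two independent sets of the same size in a finite simple graph G. If the Piran graph Π(A,B) is even-hole-free, then A and B are TJ-reconfigurable, and the minimum length of a TJ-reconfiguration sequence from A to B is exactly |A \ B|. -/

import Mathlib

set_option linter.unusedSectionVars false
set_option maxHeartbeats 1000000


variable {V : Type*} [DecidableEq V]

/-- `A` is an independent set of the graph `G`. -/
def IsIndep (G : SimpleGraph V) (A : Finset V) : Prop :=
  ∀ u ∈ A, ∀ v ∈ A, ¬G.Adj u v

/-- A graph is even-hole-free if it contains no induced cycle with an even number of
vertices (a hole has at least 4 vertices). -/
def EvenHoleFree {W : Type*} (H : SimpleGraph W) : Prop :=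
  ∀ n : ℕ, 4 ≤ n → n % 2 = 0 → IsEmpty (SimpleGraph.cycleGraph n ↪g H)

/-- The Piran graph `Π(A,B)` of two independent sets `A`, `B` of `G`: the subgraph of `G`
induced by `(A \ B) ∪ (B \ A)`. -/
def Piran (G : SimpleGraph V) (A B : Finset V) :
    SimpleGraph ((↑A \ ↑B ∪ (↑B \ ↑A) : Set V)) :=
  G.induce (↑A \ ↑B ∪ (↑B \ ↑A) : Set V)

/-- Two independent sets are TJ-adjacent (differ by one token jump). -/
def TJAdj (A B : Finset V) : Prop :=
  A.card = B.card ∧ (A \ B).card = 1 ∧ (B \ A).card = 1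

/-- There is a TJ-reconfiguration sequence of length `ℓ` from `A` to `B` in `G`. -/
def TJSeq (G : SimpleGraph V) (A B : Finset V) (ℓ : ℕ) : Prop :=
  ∃ ρ : ℕ → Finset V, ρ 0 = A ∧ ρ ℓ = B ∧ (∀ i ≤ ℓ, IsIndep G (ρ i)) ∧
    ∀ i < ℓ, TJAdj (ρ i) (ρ (i + 1))


set_option linter.unusedSectionVars false

section Abstract

variable {W : Type*} [DecidableEq W] [Fintype W] (H : SimpleGraph W) [DecidableRel H.Adj]

/-- A cycle represented as a list of vertices. -/
def CycList (l : List W) : Prop :=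
  l.IsChain H.Adj ∧ l.Nodup ∧ 3 ≤ l.length ∧
    ∃ h : l ≠ [], H.Adj (l.getLast h) (l.head h)

lemma chain_getElem_adj {l : List W} (hl : l.IsChain H.Adj) {i : ℕ} (hi : i + 1 < l.length) :
    H.Adj (l[i]'(by omega)) (l[i+1]'hi) := by
  have := List.isChain_iff_getElem.mp hl i hi
  simpa using this

lemma chain_parity (f : W → Bool) (hf : ∀ a b, H.Adj a b → f b = !f a)
    {l : List W} (hl : l.IsChain H.Adj) :
    ∀ i (hi : i < l.length),
      f (l[i]'hi) = if i % 2 = 0 then f (l[0]'(by omega)) else !(f (l[0]'(by omega))) := by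
  intro i
  induction i with
  | zero => simp
  | succ n ih =>
    intro hi
    have hadj := chain_getElem_adj H hl hi
    rw [hf _ _ hadj, ih (by omega)]
    by_cases hn : n % 2 = 0
    · have h2 : (n + 1) % 2 ≠ 0 := by omega
      simp [hn, h2]
    · have h2 : (n + 1) % 2 = 0 := by omega
      simp [hn, h2]

lemma cycList_even (f : W → Bool) (hf : ∀ a b, H.Adj a b → f b = !f a)
    {l : List W} (hc : CycList H l) : l.length % 2 = 0 := by
  obtain ⟨hch, hnd, hlen, hne, hadj⟩ := hc
  rw [List.getLast_eq_getElem, List.head_eq_getElem] at hadj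
  have h1 := hf _ _ hadj
  have h2 := chain_parity H f hf hch (l.length - 1) (by omega)
  by_contra hodd
  have h3 : (l.length - 1) % 2 = 0 := by omega
  rw [h3] at h2
  simp only [if_pos rfl] at h2
  rw [h2] at h1
  simp at h1

lemma cycList_min_chord {l : List W} (hc : CycList H l)
    (hmin : ∀ l', CycList H l' → l.length ≤ l'.length)
    {i j : ℕ} (hij : i < j) (hj : j < l.length)
    (hadj : H.Adj (l[i]'(by omega)) (l[j]'hj)) :
    j = i + 1 ∨ (i = 0 ∧ j = l.length - 1) := by
  by_contra hcon
  push_neg at hcon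
  obtain ⟨h1, h2⟩ := hcon
  obtain ⟨hch, hnd, hlen, hne, hwrap⟩ := hc
  have hji2 : j - i ≤ l.length - 2 := by
    rcases Nat.lt_or_ge (j - i) (l.length - 1) with h | h
    · omega
    · have hi0 : i = 0 := by omega
      exact absurd (by omega : j = l.length - 1) (h2 hi0)
  set l1 := (l.drop i).take (j - i + 1) with hl1
  have hlen1 : l1.length = j - i + 1 := by
    simp only [hl1, List.length_take, List.length_drop]
    omega
  have hsub : l1.Sublist l := (List.take_sublist _ _).trans (List.drop_sublist _ _)
  have hget : ∀ m (hm : m < l1.length), l1[m]'hm = l[i + m]'(by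
      rw [hlen1] at hm; omega) := by
    intro m hm
    simp only [hl1, List.getElem_take, List.getElem_drop]
  have hne1 : l1 ≠ [] := by
    intro h; rw [h] at hlen1; simp at hlen1
  have hcyc1 : CycList H l1 := by
    refine ⟨(hch.drop i).take _, hnd.sublist hsub, by omega, hne1, ?_⟩
    rw [List.getLast_eq_getElem, List.head_eq_getElem, hget, hget]
    have e1 : i + (l1.length - 1) = j := by omega
    have e2 : i + 0 = i := by omega
    convert hadj.symm using 2
  have := hmin l1 hcyc1
  omega

lemma cycList_embed {l : List W} (hc : CycList H l)
    (hchord : ∀ i j (hi : i < l.length) (hj : j < l.length), i < j →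
      H.Adj (l[i]'hi) (l[j]'hj) → j = i + 1 ∨ (i = 0 ∧ j = l.length - 1)) :
    Nonempty (SimpleGraph.cycleGraph l.length ↪g H) := by
  obtain ⟨hch, hnd, hlen, hne, hwrap⟩ := hc
  obtain ⟨m, hm⟩ : ∃ m, l.length = m + 3 := ⟨l.length - 3, by omega⟩
  rw [List.getLast_eq_getElem, List.head_eq_getElem] at hwrap
  have hcons : ∀ (a : ℕ) (ha : a + 1 < l.length), H.Adj (l[a]'(by omega)) (l[a+1]'ha) :=
    fun a ha => chain_getElem_adj H hch ha
  rw [hm]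
  -- key2 : consecutive in Fin implies adjacent
  have key2 : ∀ a b : Fin (m+3), ((b - a : Fin (m+3)) : ℕ) = 1 →
      H.Adj (l[(a : ℕ)]'(by rw [hm]; exact a.isLt)) (l[(b : ℕ)]'(by rw [hm]; exact b.isLt)) := by
    intro a b hba
    have hb : b = a + 1 := by
      have h1 : b - a = 1 := Fin.ext (by rw [hba]; rfl)
      exact (sub_eq_iff_eq_add.mp h1).trans (add_comm 1 a)
    have hbv : (b : ℕ) = ((a : ℕ) + 1) % (m + 3) := by
      rw [hb, Fin.add_def]
      rfl
    rcases Nat.lt_or_ge ((a : ℕ) + 1) (m + 3) with hlt | hge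
    · have hbv' : (b : ℕ) = (a : ℕ) + 1 := by rw [hbv, Nat.mod_eq_of_lt hlt]
      have := hcons (a : ℕ) (by rw [hm]; omega)
      convert this using 2 <;> try omega
    · have hav : (a : ℕ) = m + 2 := by have := a.isLt; omega
      have hbv' : (b : ℕ) = 0 := by
        rw [hbv, hav]
        simp
      have := hwrap
      convert this using 2 <;> try omega
  -- key : adjacency with smaller index implies cycleGraph adjacency
  have key : ∀ a b : Fin (m+3), (a : ℕ) < (b : ℕ) →
      H.Adj (l[(a : ℕ)]'(by rw [hm]; exact a.isLt)) (l[(b : ℕ)]'(by rw [hm]; exact b.isLt)) →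
      (SimpleGraph.cycleGraph (m+3)).Adj a b := by
    intro a b hab hadj'
    have hc := hchord a b (by rw [hm]; exact a.isLt) (by rw [hm]; exact b.isLt) hab hadj'
    rw [SimpleGraph.cycleGraph_adj']
    rcases hc with hcase | ⟨ha0, hb⟩
    · right
      rw [Fin.sub_def]
      simp only
      have e : m + 3 - (a : ℕ) + (b : ℕ) = (m + 3) + 1 := by
        have := b.isLt; rw [hm] at *; omega
      rw [e, Nat.add_mod_left]
      exact Nat.mod_eq_of_lt (by omega)
    · left
      rw [Fin.sub_def]
      simp only
      have e : m + 3 - (b : ℕ) + (a : ℕ) = 1 := by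
        rw [hm] at hb; omega
      rw [e]
      exact Nat.mod_eq_of_lt (by omega)
  refine ⟨⟨⟨fun i => l[(i : ℕ)]'(by rw [hm]; exact i.isLt), ?_⟩, ?_⟩⟩
  · intro i j hijeq
    simp only at hijeq
    rw [hnd.getElem_inj_iff] at hijeq
    exact Fin.ext hijeq
  · intro i j
    try simp only [Function.Embedding.coeFn_mk]
    constructor
    · intro hadj
      have hne' : (i : ℕ) ≠ (j : ℕ) := by
        intro h
        have : i = j := Fin.ext h
        subst this
        exact H.irrefl hadj
      rcases Nat.lt_or_ge (i : ℕ) (j : ℕ) with h | h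
      · exact key i j h hadj
      · exact (key j i (by omega) hadj.symm).symm
    · intro hadj
      rw [SimpleGraph.cycleGraph_adj'] at hadj
      rcases hadj with h | h
      · exact (key2 j i h).symm
      · exact key2 i j h

lemma no_cycList (hehf : EvenHoleFree H) (f : W → Bool)
    (hf : ∀ a b, H.Adj a b → f b = !f a) : ∀ l, ¬ CycList H l := by
  intro l0 hl0
  have hex : ∃ n, ∃ l : List W, CycList H l ∧ l.length = n := ⟨_, l0, hl0, rfl⟩
  classical
  obtain ⟨l, hl, hlen⟩ := Nat.find_spec hex
  have hmin : ∀ l', CycList H l' → l.length ≤ l'.length := by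
    intro l' h'
    rw [hlen]
    exact Nat.find_min' hex ⟨l', h', rfl⟩
  have heven := cycList_even H f hf hl
  have h3 : 3 ≤ l.length := hl.2.2.1
  obtain ⟨e⟩ := cycList_embed H hl
    (fun i j hi hj hij ha => cycList_min_chord H hl hmin hij hj ha)
  exact (hehf l.length (by omega) heven).false e

lemma degsum (hno : ∀ l, ¬ CycList H l) :
    ∀ (n : ℕ) (s : Finset W), s.card = n →
      (∑ v ∈ s, ((s.filter (H.Adj v)).card)) = 0 ∨
      (∑ v ∈ s, ((s.filter (H.Adj v)).card)) + 2 ≤ 2 * s.card := by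
  intro n
  induction n using Nat.strong_induction_on with
  | _ n ih =>
    intro s hs
    classical
    by_cases h0 : (∑ v ∈ s, ((s.filter (H.Adj v)).card)) = 0
    · exact Or.inl h0
    right
    -- there is an edge inside s
    obtain ⟨v0, hv0s, hv0⟩ : ∃ v0 ∈ s, (s.filter (H.Adj v0)).card ≠ 0 := by
      by_contra hcon
      push_neg at hcon
      exact h0 (Finset.sum_eq_zero hcon)
    obtain ⟨w0, hw0⟩ := Finset.card_ne_zero.mp hv0
    rw [Finset.mem_filter] at hw0
    obtain ⟨hw0s, hvw0⟩ := hw0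
    -- chains inside s
    set P : ℕ → Prop := fun k => ∃ l : List W,
      l.IsChain H.Adj ∧ l.Nodup ∧ (∀ x ∈ l, x ∈ s) ∧ l.length = k with hP
    have hbound : ∀ k, P k → k ≤ s.card := by
      rintro k ⟨l, hch, hnd, hmem, hlen⟩
      have : l.toFinset ⊆ s := fun x hx => hmem x (List.mem_toFinset.mp hx)
      have := Finset.card_le_card this
      rwa [List.toFinset_card_of_nodup hnd, hlen] at this
    have hP2 : P 2 := by
      refine ⟨[v0, w0], ?_, ?_, ?_, rfl⟩
      · simp [hvw0]
      · simp [H.ne_of_adj hvw0]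
      · intro x hx
        simp at hx
        rcases hx with rfl | rfl <;> assumption
    set N := Nat.findGreatest P s.card with hN
    have hNspec : P N := Nat.findGreatest_spec (hbound 2 hP2) hP2
    have hN2 : 2 ≤ N := Nat.le_findGreatest (hbound 2 hP2) hP2
    have hNmax : ∀ k, N < k → ¬ P k := by
      intro k hk hPk
      exact Nat.findGreatest_is_greatest hk (hbound k hPk) hPk
    obtain ⟨l, hch, hnd, hmem, hlen⟩ := hNspec
    have hlne : l ≠ [] := by
      intro h; rw [h] at hlen; simp at hlen; omega
    set v := l.getLast hlne with hv
    have hvelem : v = l[N - 1]'(by omega) := by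
      rw [hv, List.getLast_eq_getElem]
      congr 1
      omega
    have hvs : v ∈ s := hmem v (List.getLast_mem hlne)
    have hpen : l[N-2]'(by omega) ∈ s := hmem _ (List.getElem_mem _)
    have hpenadj : H.Adj v (l[N-2]'(by omega)) := by
      have := chain_getElem_adj H hch (i := N - 2) (by omega)
      rw [hvelem]
      have e : N - 2 + 1 = N - 1 := by omega
      convert this.symm using 2 <;> omega
    have hpenne : l[N-2]'(by omega) ≠ v := by
      rw [hvelem]
      intro h
      rw [hnd.getElem_inj_iff] at h
      omega
    -- the only neighbor of v in s is l[N-2]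
    have hfilter : s.filter (H.Adj v) = {l[N-2]'(by omega)} := by
      apply Finset.Subset.antisymm
      · intro w hw
        rw [Finset.mem_filter] at hw
        obtain ⟨hws, hadjw⟩ := hw
        by_cases hwl : w ∈ l
        · obtain ⟨i, hi, hiw⟩ := List.getElem_of_mem hwl
          rw [Finset.mem_singleton]
          rcases Nat.lt_or_ge i (N - 2) with hilt | hige
          · -- gives a cycle: drop i
            exfalso
            apply hno (l.drop i)
            have hlend : (l.drop i).length = N - i := by simp [hlen]
            have hdne : l.drop i ≠ [] := by
              intro h
              have := congrArg List.length h
              simp [hlen] at this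
              omega
            refine ⟨hch.drop i, hnd.sublist (List.drop_sublist _ _), by omega, hdne, ?_⟩
            rw [List.getLast_eq_getElem, List.head_eq_getElem]
            simp only [List.getElem_drop]
            have e1 : i + ((l.drop i).length - 1) = N - 1 := by
              rw [hlend]; omega
            have e2 : i + 0 = i := by omega
            have : H.Adj (l[N-1]'(by omega)) (l[i]'(by omega)) := by
              rw [← hvelem, hiw]
              exact hadjw
            convert this using 2 <;> omega
          · rcases Nat.lt_or_ge i (N - 1) with h2 | h2
            · have : i = N - 2 := by omega
              subst this
              exact hiw.symm
            · exfalso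
              have : i = N - 1 := by omega
              subst this
              rw [← hvelem] at hiw
              rw [hiw] at hadjw
              exact H.irrefl hadjw
        · -- extend the chain, contradicting maximality
          exfalso
          apply hNmax (N + 1) (by omega)
          refine ⟨l ++ [w], ?_, ?_, ?_, by simp [hlen]⟩
          · rw [List.isChain_append]
            refine ⟨hch, List.isChain_singleton w, ?_⟩
            intro x hx y hy
            simp only [List.getLast?_eq_getLast hlne, Option.mem_some_iff] at hx
            simp only [List.head?_cons, Option.mem_some_iff] at hy
            rw [← hx, ← hy]
            exact hadjw
          · rw [List.nodup_append]
            refine ⟨hnd, List.nodup_singleton w, ?_⟩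
            intro x hx
            simp only [List.mem_singleton, forall_eq]
            intro h
            rw [h] at hx
            exact hwl hx
          · intro x hx
            rw [List.mem_append] at hx
            rcases hx with hx | hx
            · exact hmem x hx
            · simp at hx
              rw [hx]
              exact hws
      · intro w hw
        rw [Finset.mem_singleton] at hw
        rw [hw, Finset.mem_filter]
        exact ⟨hpen, hpenadj⟩
    have hdv : (s.filter (H.Adj v)).card = 1 := by rw [hfilter]; simp
    -- now remove v
    set s' := s.erase v with hs'
    have hvs' : v ∉ s' := Finset.notMem_erase v s
    have hins : s = insert v s' := (Finset.insert_erase hvs).symm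
    have hcard' : s'.card = n - 1 := by rw [hs', Finset.card_erase_of_mem hvs, hs]
    have hn1 : 1 ≤ n := by rw [← hs]; exact Finset.card_pos.mpr ⟨v, hvs⟩
    have hsplit : ∀ u ∈ s', (s.filter (H.Adj u)).card
        = (s'.filter (H.Adj u)).card + (if H.Adj u v then 1 else 0) := by
      intro u hu
      rw [hins, Finset.filter_insert]
      by_cases hadj : H.Adj u v
      · rw [if_pos hadj, Finset.card_insert_of_notMem (fun hmem' => hvs' (Finset.mem_of_mem_filter _ hmem')), if_pos hadj]
      · rw [if_neg hadj, if_neg hadj, add_zero]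
    have hsum2 : (∑ u ∈ s', (s'.filter (H.Adj u)).card) + 1 + 1
        = ∑ u ∈ s, (s.filter (H.Adj u)).card := by
      rw [← Finset.sum_erase_add s _ hvs, ← hs', hdv]
      congr 1
      rw [Finset.sum_congr rfl hsplit, Finset.sum_add_distrib]
      congr 1
      rw [← Finset.sum_filter]
      have : s'.filter (fun u => H.Adj u v) = {l[N-2]'(by omega)} := by
        have e : s'.filter (fun u => H.Adj u v) = s.filter (H.Adj v) := by
          rw [hfilter]
          apply Finset.Subset.antisymm
          · intro x hx
            rw [Finset.mem_filter] at hx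
            rw [← hfilter, Finset.mem_filter]
            exact ⟨Finset.mem_of_mem_erase hx.1, hx.2.symm⟩
          · intro x hx
            rw [Finset.mem_singleton] at hx
            rw [Finset.mem_filter, hx]
            refine ⟨Finset.mem_erase.mpr ⟨hpenne, hpen⟩, hpenadj.symm⟩
        rw [e, hfilter]
      rw [this]
      simp
    rcases ih (n-1) (by omega) s' hcard' with hz | hle
    · rw [← hsum2, hz]
      have : 2 ≤ s.card := by
        apply Finset.one_lt_card.mpr
        exact ⟨v, hvs, l[N-2]'(by omega), hpen, fun h => hpenne h.symm⟩
      omega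
    · rw [← hsum2]
      rw [hcard'] at hle
      rw [hs]
      omega

lemma exists_leaf (hno : ∀ l, ¬ CycList H l) (f : W → Bool)
    (hf : ∀ a b, H.Adj a b → f b = !f a)
    (hcard : (Finset.univ.filter (fun w => f w = true)).card
      = (Finset.univ.filter (fun w => f w = false)).card)
    (hne : 0 < (Finset.univ.filter (fun w => f w = true)).card) :
    ∃ y, f y = true ∧ (Finset.univ.filter (H.Adj y)).card ≤ 1 := by
  by_contra hcon
  push_neg at hcon
  have hdeg : ∀ y, f y = true → 2 ≤ (Finset.univ.filter (H.Adj y)).card := by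
    intro y hy
    exact hcon y hy
  set Y := Finset.univ.filter (fun w => f w = true) with hY
  set X := Finset.univ.filter (fun w => f w = false) with hX
  -- each vertex's neighbors are on the other side
  have hnbr : ∀ a, (Finset.univ.filter (H.Adj a)).card
      = ∑ b ∈ (if f a = true then X else Y), (if H.Adj a b then 1 else 0) := by
    intro a
    rw [Finset.card_filter]
    rcases Bool.eq_false_or_eq_true (f a) with ha | ha
    · rw [if_pos ha, hX]
      rw [Finset.sum_filter_add_sum_filter_not Finset.univ (fun w => f w = false)
        (fun b => if H.Adj a b then 1 else 0) |>.symm]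
      have hz : ∀ b ∈ Finset.univ.filter (fun w => ¬ f w = false),
          (if H.Adj a b then 1 else 0) = 0 := by
        intro b hb
        rw [Finset.mem_filter] at hb
        rw [if_neg]
        intro hadj
        have hfb := hf _ _ hadj
        rw [ha] at hfb
        simp at hfb
        rw [hfb] at hb
        simp at hb
      rw [Finset.sum_eq_zero hz, add_zero]
    · rw [if_neg (by simp [ha]), hY]
      rw [Finset.sum_filter_add_sum_filter_not Finset.univ (fun w => f w = true)
        (fun b => if H.Adj a b then 1 else 0) |>.symm]
      have hz : ∀ b ∈ Finset.univ.filter (fun w => ¬ f w = true),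
          (if H.Adj a b then 1 else 0) = 0 := by
        intro b hb
        rw [Finset.mem_filter] at hb
        rw [if_neg]
        intro hadj
        have hfb := hf _ _ hadj
        rw [ha] at hfb
        simp at hfb
        exact hb.2 hfb
      rw [Finset.sum_eq_zero hz, add_zero]
  -- total degree sum
  have hsum_eq : ∑ y ∈ Y, (Finset.univ.filter (H.Adj y)).card
      = ∑ x ∈ X, (Finset.univ.filter (H.Adj x)).card := by
    have h1 : ∑ y ∈ Y, (Finset.univ.filter (H.Adj y)).card
        = ∑ y ∈ Y, ∑ x ∈ X, (if H.Adj y x then 1 else 0) := by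
      apply Finset.sum_congr rfl
      intro y hy
      rw [hY, Finset.mem_filter] at hy
      rw [hnbr y, if_pos hy.2]
    have h2 : ∑ x ∈ X, (Finset.univ.filter (H.Adj x)).card
        = ∑ x ∈ X, ∑ y ∈ Y, (if H.Adj x y then 1 else 0) := by
      apply Finset.sum_congr rfl
      intro x hx
      rw [hX, Finset.mem_filter] at hx
      rw [hnbr x, if_neg (by simp [hx.2])]
    rw [h1, h2, Finset.sum_comm]
    apply Finset.sum_congr rfl
    intro x _
    apply Finset.sum_congr rfl
    intro y _
    congr 1
    simp [SimpleGraph.adj_comm]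
  have hXY : X ∪ Y = Finset.univ := by
    apply Finset.eq_univ_of_forall
    intro w
    rw [Finset.mem_union, hX, hY]
    simp only [Finset.mem_filter, Finset.mem_univ, true_and]
    rcases Bool.eq_false_or_eq_true (f w) with h | h
    · exact Or.inr h
    · exact Or.inl h
  have hdisj : Disjoint X Y := by
    rw [Finset.disjoint_left]
    intro w hw hw'
    rw [hX, Finset.mem_filter] at hw
    rw [hY, Finset.mem_filter] at hw'
    rw [hw.2] at hw'
    simp at hw'
  have hcardU : Y.card + X.card = (Finset.univ : Finset W).card := by
    have hXeq : X = Finset.univ.filter (fun w => ¬ f w = true) := by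
      rw [hX]
      apply Finset.filter_congr
      intro w _
      simp
    rw [hXeq, hY]
    exact Finset.card_filter_add_card_filter_not (fun w => f w = true)
  have htot : ∑ v ∈ Finset.univ, ((Finset.univ.filter (H.Adj v)).card)
      = 2 * ∑ y ∈ Y, (Finset.univ.filter (H.Adj y)).card := by
    have h := Finset.sum_union (f := fun v => (Finset.univ.filter (H.Adj v)).card) hdisj
    rw [hXY] at h
    beta_reduce at h
    rw [h, hsum_eq]
    omega
  have hYbig : 2 * Y.card ≤ ∑ y ∈ Y, (Finset.univ.filter (H.Adj y)).card := by
    calc 2 * Y.card = ∑ _y ∈ Y, 2 := by rw [Finset.sum_const, smul_eq_mul, mul_comm]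
    _ ≤ _ := by
      apply Finset.sum_le_sum
      intro y hy
      rw [hY, Finset.mem_filter] at hy
      exact hdeg y hy.2
  rcases degsum H hno Finset.univ.card Finset.univ rfl with hz | hle
  · obtain ⟨y, hy⟩ := Finset.card_pos.mp hne
    rw [hY, Finset.mem_filter] at hy
    have h2 := hdeg y hy.2
    have : (Finset.univ.filter (H.Adj y)).card = 0 := by
      have hle0 : (Finset.univ.filter (H.Adj y)).card
          ≤ ∑ v ∈ Finset.univ, ((Finset.univ.filter (H.Adj v)).card) :=
        Finset.single_le_sum (f := fun v => (Finset.univ.filter (H.Adj v)).card)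
          (fun _ _ => Nat.zero_le _) (Finset.mem_univ y)
      omega
    omega
  · -- 2*univ ≥ sum + 2 ≥ 2*(2*Y) + 2 = 2*(X+Y)+2
    have hXYcard : X.card = Y.card := hcard.symm
    rw [htot] at hle
    rw [← hcardU, hXYcard] at hle
    omega

end Abstract

section Application

variable {V : Type*} [DecidableEq V]

lemma tjadj_sdiff_le {S S' B : Finset V} (h : TJAdj S S') :
    (S \ B).card ≤ (S' \ B).card + 1 := by
  obtain ⟨hc, h1, h2⟩ := h
  have hsub : S \ B ⊆ (S' \ B) ∪ (S \ S') := by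
    intro a ha
    rw [Finset.mem_sdiff] at ha
    rw [Finset.mem_union, Finset.mem_sdiff, Finset.mem_sdiff]
    by_cases h' : a ∈ S'
    · exact Or.inl ⟨h', ha.2⟩
    · exact Or.inr ⟨ha.1, h'⟩
  calc (S \ B).card ≤ ((S' \ B) ∪ (S \ S')).card := Finset.card_le_card hsub
    _ ≤ (S' \ B).card + (S \ S').card := Finset.card_union_le _ _
    _ = (S' \ B).card + 1 := by rw [h1]

lemma tjseq_lb {G : SimpleGraph V} {A B : Finset V} {ℓ : ℕ} (h : TJSeq G A B ℓ) :
    (A \ B).card ≤ ℓ := by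
  obtain ⟨ρ, h0, hl, hind, hadj⟩ := h
  have key : ∀ i, i ≤ ℓ → (ρ 0 \ B).card ≤ i + (ρ i \ B).card := by
    intro i
    induction i with
    | zero => intro _; omega
    | succ n ih =>
      intro hi
      have h1 := tjadj_sdiff_le (B := B) (hadj n (by omega))
      have h2 := ih (by omega)
      omega
  have := key ℓ le_rfl
  rw [h0, hl] at this
  simp only [Finset.sdiff_self, Finset.card_empty] at this
  omega

lemma build [Fintype V] (G : SimpleGraph V) :
    ∀ (k : ℕ) (A B : Finset V), IsIndep G A → IsIndep G B → A.card = B.card →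
      (A \ B).card = k → EvenHoleFree (Piran G A B) → TJSeq G A B k := by
  intro k
  induction k with
  | zero =>
    intro A B hA hB hc hk _
    have hAB : A = B := by
      have h1 : A ⊆ B := Finset.sdiff_eq_empty_iff_subset.mp (Finset.card_eq_zero.mp hk)
      have h2 : B ⊆ A := by
        apply Finset.sdiff_eq_empty_iff_subset.mp
        apply Finset.card_eq_zero.mp
        rw [← Finset.card_sdiff_comm hc]
        exact hk
      exact Finset.Subset.antisymm h1 h2
    exact ⟨fun _ => A, rfl, hAB.symm ▸ rfl, fun i _ => hA, fun i hi => absurd hi (by omega)⟩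
  | succ m ih =>
    intro A B hA hB hcard hk hehf
    classical
    set s : Set V := (↑A \ ↑B ∪ (↑B \ ↑A) : Set V) with hs
    have hPadj : ∀ a b : ↥s, (Piran G A B).Adj a b ↔ G.Adj a.val b.val := by
      intro a b
      simp [Piran, SimpleGraph.comap_adj]
    set f : ↥s → Bool := fun w => decide (w.val ∈ B) with hfdef
    have hmemf : ∀ w : ↥s, f w = true ↔ w.val ∈ B := by
      intro w; simp [hfdef]
    have hsidesY : ∀ w : ↥s, f w = true → w.val ∈ B \ A := by
      intro w hw
      rw [hmemf] at hw
      rcases w.property with hmem | hmem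
      · exact absurd hw (by simp at hmem; exact hmem.2)
      · simp at hmem
        exact Finset.mem_sdiff.mpr ⟨hw, hmem.2⟩
    have hsidesX : ∀ w : ↥s, f w = false → w.val ∈ A \ B := by
      intro w hw
      have hnB : w.val ∉ B := by
        intro h
        rw [← hmemf] at h
        rw [hw] at h
        simp at h
      rcases w.property with hmem | hmem
      · simp at hmem
        exact Finset.mem_sdiff.mpr ⟨hmem.1, hmem.2⟩
      · simp at hmem
        exact absurd hmem.1 hnB
    have hf : ∀ a b : ↥s, (Piran G A B).Adj a b → f b = !f a := by
      intro a b hadj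
      rw [hPadj] at hadj
      rcases Bool.eq_false_or_eq_true (f a) with ha | ha
      · -- a ∈ B ; then b ∉ B
        have haB : a.val ∈ B := (hmemf a).mp ha
        rw [ha]
        simp only [Bool.not_true]
        by_contra hcontra
        have hbB : b.val ∈ B := by
          rw [← hmemf]
          revert hcontra
          cases (f b) <;> simp
        exact hB _ haB _ hbB hadj
      · have haA : a.val ∈ A \ B := hsidesX a ha
        rw [ha]
        simp only [Bool.not_false]
        rw [hmemf]
        by_contra hbB
        have hbA : b.val ∈ A \ B := by
          apply hsidesX
          cases hfb : (f b)
          · rfl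
          · exact absurd ((hmemf b).mp hfb) hbB
        exact hA _ (Finset.mem_sdiff.mp haA).1 _ (Finset.mem_sdiff.mp hbA).1 hadj
    -- cardinalities of the two sides
    have hYcard : (Finset.univ.filter (fun w : ↥s => f w = true)).card = (B \ A).card := by
      apply Finset.card_nbij (i := fun w => w.val)
      · intro w hw
        rw [Finset.mem_coe, Finset.mem_filter] at hw
        exact hsidesY w hw.2
      · intro w _ w' _ h
        exact Subtype.ext h
      · intro y hy
        simp only [Finset.coe_filter, Set.mem_setOf_eq] at *
        have hyBA : y ∈ B \ A := hy
        rw [Finset.mem_sdiff] at hyBA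
        refine ⟨⟨y, Or.inr ⟨hyBA.1, hyBA.2⟩⟩, ?_, rfl⟩
        simp only [Set.mem_setOf_eq, Finset.mem_univ, true_and]
        rw [hmemf]
        exact hyBA.1
    have hXcard : (Finset.univ.filter (fun w : ↥s => f w = false)).card = (A \ B).card := by
      apply Finset.card_nbij (i := fun w => w.val)
      · intro w hw
        rw [Finset.mem_coe, Finset.mem_filter] at hw
        exact hsidesX w hw.2
      · intro w _ w' _ h
        exact Subtype.ext h
      · intro x hx
        simp only [Finset.coe_filter, Set.mem_setOf_eq] at *
        have hxAB : x ∈ A \ B := hx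
        rw [Finset.mem_sdiff] at hxAB
        refine ⟨⟨x, Or.inl ⟨hxAB.1, hxAB.2⟩⟩, ?_, rfl⟩
        simp only [Set.mem_setOf_eq, Finset.mem_univ, true_and]
        exact decide_eq_false hxAB.2
    have hBA : (B \ A).card = m + 1 := by
      rw [← Finset.card_sdiff_comm hcard]
      exact hk
    -- find the leaf
    have hno := no_cycList (Piran G A B) hehf f hf
    obtain ⟨y, hyf, hydeg⟩ := exists_leaf (Piran G A B) hno f hf
      (by rw [hYcard, hXcard, hBA, hk]) (by rw [hYcard, hBA]; omega)
    have hy0 : y.val ∈ B \ A := hsidesY y hyf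
    rw [Finset.mem_sdiff] at hy0
    obtain ⟨hy0B, hy0A⟩ := hy0
    -- neighbors of y inside A \ B
    set Nset := (A \ B).filter (fun x => G.Adj x y.val) with hNset
    have hNle : Nset.card ≤ 1 := by
      refine le_trans ?_ hydeg
      apply Finset.card_le_card_of_injOn
        (f := fun x => if h : x ∈ s then (⟨x, h⟩ : ↥s) else y)
      · intro x hx
        rw [hNset, Finset.mem_coe, Finset.mem_filter] at hx
        obtain ⟨hx1, hx2⟩ := hx
        rw [Finset.mem_sdiff] at hx1
        have hxs : x ∈ s := Or.inl ⟨hx1.1, hx1.2⟩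
        rw [Finset.mem_coe]; beta_reduce; rw [dif_pos hxs, Finset.mem_filter]
        refine ⟨Finset.mem_univ _, ?_⟩
        rw [hPadj]
        exact hx2.symm
      · intro a ha b hb h
        simp only [Finset.mem_coe] at ha hb
        rw [hNset, Finset.mem_filter, Finset.mem_sdiff] at ha hb
        have has : a ∈ s := Or.inl ⟨ha.1.1, ha.1.2⟩
        have hbs : b ∈ s := Or.inl ⟨hb.1.1, hb.1.2⟩
        have h' : (⟨a, has⟩ : ↥s) = ⟨b, hbs⟩ := by
          simpa [dif_pos has, dif_pos hbs] using h
        exact congrArg Subtype.val h'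
    -- choose the token x to move
    have hABne : (A \ B).Nonempty := Finset.card_pos.mp (by omega)
    obtain ⟨x, hxAB, huniq⟩ : ∃ x, x ∈ A \ B ∧ ∀ v ∈ A \ B, G.Adj v y.val → v = x := by
      rcases Finset.eq_empty_or_nonempty Nset with hemp | ⟨x, hx⟩
      · obtain ⟨x, hx⟩ := hABne
        refine ⟨x, hx, ?_⟩
        intro v hv hadj
        exfalso
        have : v ∈ Nset := by
          rw [hNset, Finset.mem_filter]
          exact ⟨hv, hadj⟩
        rw [hemp] at this
        simp at this
      · have hxAB : x ∈ A \ B := Finset.mem_of_mem_filter _ hx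
        refine ⟨x, hxAB, ?_⟩
        intro v hv hadj
        have hvN : v ∈ Nset := by
          rw [hNset, Finset.mem_filter]
          exact ⟨hv, hadj⟩
        exact Finset.card_le_one.mp hNle v hvN x hx
    rw [Finset.mem_sdiff] at hxAB
    obtain ⟨hxA, hxB⟩ := hxAB
    have hxy : x ≠ y.val := fun h => hy0A (h ▸ hxA)
    set y0 := y.val with hy0def
    set A' := insert y0 (A.erase x) with hA'
    have hy0notE : y0 ∉ A.erase x := fun h => hy0A (Finset.mem_of_mem_erase h)
    have hA'card : A'.card = A.card := by
      rw [hA', Finset.card_insert_of_notMem hy0notE, Finset.card_erase_of_mem hxA]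
      have : 0 < A.card := Finset.card_pos.mpr ⟨x, hxA⟩
      omega
    have hmemA' : ∀ a, a ∈ A' ↔ (a = y0 ∨ (a ≠ x ∧ a ∈ A)) := by
      intro a
      rw [hA', Finset.mem_insert, Finset.mem_erase]
    -- A' is independent
    have hA'indep : IsIndep G A' := by
      intro u hu v hv hadj
      rw [hmemA'] at hu hv
      rcases hu with rfl | ⟨hux, huA⟩
      · rcases hv with rfl | ⟨hvx, hvA⟩
        · exact G.irrefl hadj
        · by_cases hvB : v ∈ B
          · exact hB _ hy0B _ hvB hadj
          · have : v ∈ A \ B := Finset.mem_sdiff.mpr ⟨hvA, hvB⟩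
            exact hvx (huniq v this hadj.symm)
      · rcases hv with rfl | ⟨hvx, hvA⟩
        · by_cases huB : u ∈ B
          · exact hB _ huB _ hy0B hadj
          · have : u ∈ A \ B := Finset.mem_sdiff.mpr ⟨huA, huB⟩
            exact hux (huniq u this hadj)
        · exact hA _ huA _ hvA hadj
    -- difference sets
    have hA'B : A' \ B = (A \ B).erase x := by
      ext a
      rw [Finset.mem_sdiff, hmemA', Finset.mem_erase, Finset.mem_sdiff]
      constructor
      · rintro ⟨rfl | ⟨hax, haA⟩, haB⟩
        · exact absurd hy0B haB
        · exact ⟨hax, haA, haB⟩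
      · rintro ⟨hax, haA, haB⟩
        exact ⟨Or.inr ⟨hax, haA⟩, haB⟩
    have hBA' : B \ A' = (B \ A).erase y0 := by
      ext a
      rw [Finset.mem_sdiff, Finset.mem_erase, Finset.mem_sdiff]
      constructor
      · rintro ⟨haB, haA'⟩
        rw [hmemA'] at haA'
        push_neg at haA'
        refine ⟨haA'.1, haB, ?_⟩
        intro haA
        have hax : a ≠ x := fun h => hxB (h ▸ haB)
        exact (haA'.2 hax) haA
      · rintro ⟨hay, haB, haA⟩
        refine ⟨haB, ?_⟩
        rw [hmemA']
        push_neg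
        refine ⟨hay, fun hax => haA⟩
    have hA'Bcard : (A' \ B).card = m := by
      rw [hA'B, Finset.card_erase_of_mem (Finset.mem_sdiff.mpr ⟨hxA, hxB⟩), hk]
      omega
    -- even-hole-freeness of the smaller Piran graph
    have hehf' : EvenHoleFree (Piran G A' B) := by
      intro n hn4 hneven
      set s' : Set V := (↑A' \ ↑B ∪ (↑B \ ↑A') : Set V) with hs'
      have hsub : ∀ a, a ∈ s' → a ∈ s := by
        intro a ha
        rcases ha with ⟨haA', haB⟩ | ⟨haB, haA'⟩
        · left
          have : a ∈ A' := haA'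
          rw [hmemA'] at this
          rcases this with rfl | ⟨_, haA⟩
          · exact absurd hy0B haB
          · exact ⟨haA, haB⟩
        · right
          refine ⟨haB, ?_⟩
          intro haA
          have hax : a ≠ x := fun h => hxB (h ▸ (haB : a ∈ B))
          exact haA' ((hmemA' a).mpr (Or.inr ⟨hax, haA⟩))
      have φ : Piran G A' B ↪g Piran G A B := by
        refine ⟨⟨fun w => ⟨w.val, hsub w.val w.property⟩, ?_⟩, ?_⟩
        · intro a b h
          apply Subtype.ext
          have h2 := congrArg Subtype.val h
          simpa using h2
        · intro a b
          simp [Piran, SimpleGraph.comap_adj]; rfl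
      exact ⟨fun e => (hehf n hn4 hneven).false (φ.comp e)⟩
    -- the first move is a valid token jump
    have hAdiff : A \ A' = {x} := by
      ext a
      rw [Finset.mem_sdiff, hmemA', Finset.mem_singleton]
      constructor
      · rintro ⟨haA, haA'⟩
        push_neg at haA'
        by_contra hax
        exact (haA'.2 hax) haA
      · rintro rfl
        push_neg
        exact ⟨hxA, fun h => absurd h hxy, fun h _ => h rfl⟩
    have hA'diff : A' \ A = {y0} := by
      ext a
      rw [Finset.mem_sdiff, hmemA', Finset.mem_singleton]
      constructor
      · rintro ⟨rfl | ⟨_, haA⟩, hnA⟩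
        · rfl
        · exact absurd haA hnA
      · rintro rfl
        exact ⟨Or.inl rfl, hy0A⟩
    have hTJ : TJAdj A A' := ⟨hA'card.symm, by rw [hAdiff]; simp, by rw [hA'diff]; simp⟩
    -- apply induction hypothesis and prepend the first move
    obtain ⟨ρ, hρ0, hρm, hρind, hρadj⟩ :=
      ih A' B hA'indep hB (hA'card.trans hcard) hA'Bcard hehf'
    refine ⟨fun i => if i = 0 then A else ρ (i - 1), by simp, ?_, ?_, ?_⟩
    · simp only [Nat.succ_ne_zero, if_neg]
      simpa using hρm
    · intro i hi
      by_cases h0 : i = 0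
      · simpa [h0] using hA
      · simp only [if_neg h0]
        exact hρind (i - 1) (by omega)
    · intro i hi
      by_cases h0 : i = 0
      · subst h0
        simp only [if_pos rfl, if_neg (by omega : (1 : ℕ) ≠ 0)]
        have h1 : (1 : ℕ) - 1 = 0 := rfl
        rw [h1, hρ0]
        exact hTJ
      · simp only [if_neg h0, if_neg (by omega : i + 1 ≠ 0)]
        have e : i + 1 - 1 = (i - 1) + 1 := by omega
        rw [e]
        exact hρadj (i - 1) (by omega)
end Application

/-- if `A` and `B` are independent sets of the same size in `G` whose Piran
graph is even-hole-free, then `A` and `B` are TJ-reconfigurable and the minimum length of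
a TJ-reconfiguration sequence from `A` to `B` is exactly `|A \ B|`. -/
theorem stmt15 {V : Type*} [DecidableEq V] [Fintype V] (G : SimpleGraph V)
    (A B : Finset V) (hA : IsIndep G A) (hB : IsIndep G B)
    (hcard : A.card = B.card)
    (hehf : EvenHoleFree (Piran G A B)) :
    (∃ ℓ, TJSeq G A B ℓ) ∧ IsLeast {ℓ | TJSeq G A B ℓ} ((A \ B).card) := by
  refine ⟨⟨(A \ B).card, build G _ A B hA hB hcard rfl hehf⟩, ?_, ?_⟩
  · exact build G _ A B hA hB hcard rfl hehf
  · intro ℓ hℓ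
    exact tjseq_lb hℓ
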